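/- Let H be a complex (or real) inner product space, let f, g, h ∈ H, and let λ ≥ 0. If Re⟨h + λ·g, g + λ·f⟩ ≤ 0, then λ²·‖g‖² ≤ ‖h‖² + λ⁴·‖f‖². -/

import Mathlib

/-- Inequality (4.1): restricted dissipativity Re⟨h+λg, g+λf⟩ ≤ 0 implies
λ²‖g‖² ≤ ‖h‖² + λ⁴‖f‖². -/
theorem kato_step_inequality
    {H : Type*} [NormedAddCommGroup H] [InnerProductSpace ℂ H]
    (f g h : H) (l : ℝ) (hl : 0 ≤ l)
    (hdis : (inner ℂ (h + (l : ℂ) • g) (g + (l : ℂ) • f) : ℂ).re ≤ 0) :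
    l ^ 2 * ‖g‖ ^ 2 ≤ ‖h‖ ^ 2 + l ^ 4 * ‖f‖ ^ 2 := by
  letI : InnerProductSpace ℝ H := InnerProductSpace.rclikeToReal ℂ H
  have hre : (inner ℂ (h + (l : ℂ) • g) (g + (l : ℂ) • f) : ℂ).re
      = (inner ℝ (h + l • g) (g + l • f) : ℝ) := by
    rw [real_inner_eq_re_inner ℂ]
    congr 1 <;> simp [Complex.coe_smul]
  rw [hre] at hdis
  have hA : (0:ℝ) ≤ ‖h + l • g + (l^2) • f‖^2 := by positivity
  have expand : ‖h + l • g + (l^2) • f‖^2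
      = ‖h‖^2 + l^2*‖g‖^2 + l^4*‖f‖^2
        + 2*l*(inner ℝ (h + l • g) (g + l • f) : ℝ) - 2*l^2*‖g‖^2 := by
    rw [@norm_add_sq_real, @norm_add_sq_real]
    simp only [inner_add_left, inner_add_right, real_inner_smul_left,
      real_inner_smul_right, norm_smul, real_inner_self_eq_norm_sq]
    rw [real_inner_comm f h, real_inner_comm f g]
    simp [abs_of_nonneg hl, mul_pow]
    ring
  nlinarith [mul_nonneg hl (neg_nonneg.mpr hdis)]
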